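/- A finite graph Γ = (A; R) is k-orientable (there is an orientation of its edges in which every vertex has out-degree at most k) if and only if it is k-sparse (every subset B of vertices spans at most k·|B| edges). -/

import Mathlib

open scoped Classical

/-- A finite graph (vertex type `V`, edge set `Ed` of non-diagonal unordered pairs)
is `k`-orientable iff it is `k`-sparse. -/
theorem sparse_iff_orientable (k : ℕ) (V : Type*) [Fintype V]
    (Ed : Finset (Sym2 V)) (hEd : ∀ e ∈ Ed, ¬ e.IsDiag) :
    (∃ S : V → V → Prop,
        (∀ a b : V, s(a, b) ∈ Ed ↔ (S a b ∨ S b a)) ∧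
        (∀ a b : V, ¬ (S a b ∧ S b a)) ∧
        (∀ a : V, (Finset.univ.filter fun b => S a b).card ≤ k)) ↔
      (∀ B : Finset V, (Ed.filter fun e => ∀ x ∈ e, x ∈ B).card ≤ k * B.card) := by
  constructor
  · rintro ⟨S, hmem, hasym, hdeg⟩ B
    have hsub : (Ed.filter fun e => ∀ x ∈ e, x ∈ B) ⊆
        B.biUnion (fun a => (Finset.univ.filter fun b => S a b).image (fun b => s(a, b))) := by
      intro e he
      simp only [Finset.mem_filter] at he
      obtain ⟨he1, he2⟩ := he
      induction e using Sym2.ind with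
      | _ x y =>
        rcases (hmem x y).1 he1 with h | h
        · exact Finset.mem_biUnion.2 ⟨x, he2 x (by simp),
            Finset.mem_image.2 ⟨y, Finset.mem_filter.2 ⟨Finset.mem_univ _, h⟩, rfl⟩⟩
        · exact Finset.mem_biUnion.2 ⟨y, he2 y (by simp),
            Finset.mem_image.2 ⟨x, Finset.mem_filter.2 ⟨Finset.mem_univ _, h⟩,
              by rw [Sym2.eq_swap]⟩⟩
    calc (Ed.filter fun e => ∀ x ∈ e, x ∈ B).card
        ≤ (B.biUnion fun a => (Finset.univ.filter fun b => S a b).image fun b => s(a, b)).card :=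
          Finset.card_le_card hsub
      _ ≤ ∑ a ∈ B, ((Finset.univ.filter fun b => S a b).image fun b => s(a, b)).card :=
          Finset.card_biUnion_le
      _ ≤ ∑ _a ∈ B, k := Finset.sum_le_sum fun a _ =>
          le_trans Finset.card_image_le (hdeg a)
      _ = k * B.card := by rw [Finset.sum_const, smul_eq_mul, mul_comm]
  · intro hsparse
    set t : {e // e ∈ Ed} → Finset (V × Fin k) :=
      fun e => Finset.univ.filter fun p => p.1 ∈ e.1 with ht
    have hall : ∀ s : Finset {e // e ∈ Ed}, s.card ≤ (s.biUnion t).card := by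
      intro s
      set B : Finset V := Finset.univ.filter fun v => ∃ e ∈ s, v ∈ (e : {e // e ∈ Ed}).1 with hB
      have hbi : s.biUnion t = B ×ˢ Finset.univ := by
        ext ⟨v, i⟩
        simp [ht, hB, Finset.mem_biUnion]
      have hcard : (s.biUnion t).card = B.card * k := by
        rw [hbi, Finset.card_product, Finset.card_univ, Fintype.card_fin]
      rw [hcard]
      have h1 : s.card ≤ (Ed.filter fun e => ∀ x ∈ e, x ∈ B).card := by
        apply Finset.card_le_card_of_injOn (fun e => e.1)
        · intro e he
          refine Finset.mem_filter.2 ⟨e.2, fun x hx => ?_⟩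
          exact Finset.mem_filter.2 ⟨Finset.mem_univ _, ⟨e, he, hx⟩⟩
        · intro e _ e' _ h
          exact Subtype.ext h
      calc s.card ≤ k * B.card := le_trans h1 (hsparse B)
        _ = B.card * k := mul_comm _ _
    obtain ⟨f, hfinj, hf⟩ := (Finset.all_card_le_biUnion_card_iff_exists_injective t).1 hall
    refine ⟨fun a b => ∃ h : s(a, b) ∈ Ed, (f ⟨s(a, b), h⟩).1 = a, ?_, ?_, ?_⟩
    · intro a b
      constructor
      · intro h
        have hm : (f ⟨s(a, b), h⟩).1 ∈ s(a, b) := by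
          have := hf ⟨s(a, b), h⟩
          simpa [ht] using this
        rcases Sym2.mem_iff.mp hm with h1 | h1
        · exact Or.inl ⟨h, h1⟩
        · refine Or.inr ⟨by rwa [Sym2.eq_swap], ?_⟩
          have hsub : (⟨s(b, a), by rwa [Sym2.eq_swap]⟩ : {e // e ∈ Ed}) = ⟨s(a, b), h⟩ :=
            Subtype.ext (Sym2.eq_swap)
          rw [hsub]; exact h1
      · rintro (⟨h, _⟩ | ⟨h, _⟩)
        · exact h
        · rwa [Sym2.eq_swap] at h
    · rintro a b ⟨⟨h1, hfa⟩, ⟨h2, hfb⟩⟩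
      have hne : a ≠ b := by
        intro hab
        exact hEd _ h1 (by simp [hab])
      have hsub : (⟨s(b, a), h2⟩ : {e // e ∈ Ed}) = ⟨s(a, b), h1⟩ :=
        Subtype.ext (Sym2.eq_swap)
      rw [hsub] at hfb
      exact hne (hfa.symm.trans hfb)
    · intro a
      refine le_trans (Finset.card_le_card_of_injOn
          (t := (Finset.univ : Finset (Fin k)).image some)
          (fun b => if h : s(a, b) ∈ Ed then some ((f ⟨s(a, b), h⟩).2) else none)
          ?_ ?_) ?_
      · intro b hb
        simp only [Finset.mem_coe, Finset.mem_filter] at hb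
        obtain ⟨-, h, -⟩ := hb
        simp only [dif_pos h]
        exact Finset.mem_image.2 ⟨_, Finset.mem_univ _, rfl⟩
      · intro b1 hb1 b2 hb2 heq
        simp only [Finset.mem_coe, Finset.mem_filter] at hb1 hb2
        obtain ⟨-, h1, e1⟩ := hb1
        obtain ⟨-, h2, e2⟩ := hb2
        simp only [dif_pos h1, dif_pos h2] at heq
        have hsnd : (f ⟨s(a, b1), h1⟩).2 = (f ⟨s(a, b2), h2⟩).2 := Option.some.inj heq
        have hfeq : f ⟨s(a, b1), h1⟩ = f ⟨s(a, b2), h2⟩ :=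
          Prod.ext (e1.trans e2.symm) hsnd
        have hsym : s(a, b1) = s(a, b2) := congrArg Subtype.val (hfinj hfeq)
        rcases Sym2.eq_iff.mp hsym with ⟨-, h⟩ | ⟨ha, hb⟩
        · exact h
        · exact hb.trans ha
      · rw [Finset.card_image_of_injective _ (Option.some_injective _),
          Finset.card_univ, Fintype.card_fin]
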